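/- Let f : 2^V → R≥0 be a monotone submodular set function with f(∅) = 0 on a finite ground set V, and let s ≤ |V|. Let S_greedy be the set obtained by s steps of greedy selection, each step adding an element with maximal marginal gain. Then f(S_greedy) ≥ (1 − 1/e) · max_{|S| ≤ s} f(S). -/
import Mathlib


open Finset

lemma greedy_sub_telescope {α : Type} [DecidableEq α] (f : Finset α → ℝ)
    (hsub : ∀ S T : Finset α, S ⊆ T → ∀ x ∉ T,
      f (insert x T) - f T ≤ f (insert x S) - f S)
    (B : Finset α) :
    ∀ S : Finset α, f (S ∪ B) ≤ f B + ∑ x ∈ S, (f (insert x B) - f B) := by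
  intro S
  induction S using Finset.induction_on with
  | empty => simp
  | @insert a S ha ih =>
    rw [Finset.sum_insert ha, Finset.insert_union]
    by_cases hb : a ∈ S ∪ B
    · rw [Finset.insert_eq_self.2 hb]
      have haB : a ∈ B := by
        rcases Finset.mem_union.1 hb with h | h
        · exact absurd h ha
        · exact h
      rw [Finset.insert_eq_self.2 haB]
      linarith
    · have h1 : f (insert a (S ∪ B)) - f (S ∪ B) ≤ f (insert a B) - f B :=
        hsub B (S ∪ B) Finset.subset_union_right a hb
      linarith

/-- Nemhauser–Wolsey–Fisher greedy guarantee: for a non-negative monotone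
submodular set function `f` with `f ∅ = 0` on a finite ground set `V`, the set
obtained by `s` steps of greedy selection (each step adding an element of `V`
with maximal marginal gain) achieves at least `(1 − 1/e)` times the value of
any subset of `V` of cardinality at most `s`. -/
theorem greedy_submodular_guarantee {α : Type} [DecidableEq α]
    (V : Finset α) (f : Finset α → ℝ)
    (hmono : ∀ S T : Finset α, S ⊆ T → f S ≤ f T)
    (hsub : ∀ S T : Finset α, S ⊆ T → ∀ x ∉ T,
      f (insert x T) - f T ≤ f (insert x S) - f S)
    (hempty : f ∅ = 0) (hnonneg : ∀ S, 0 ≤ f S)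
    (s : ℕ) (hs : s ≤ V.card)
    (g : ℕ → Finset α) (hg0 : g 0 = ∅)
    (hgreedy : ∀ t < s, ∃ x ∈ V, g (t + 1) = insert x (g t) ∧
      ∀ y ∈ V, f (insert y (g t)) - f (g t) ≤ f (insert x (g t)) - f (g t)) :
    ∀ S ⊆ V, S.card ≤ s → (1 - (Real.exp 1)⁻¹) * f S ≤ f (g s) := by
  intro S hSV hScard
  rcases Nat.eq_zero_or_pos s with hs0 | hspos
  · subst hs0
    have hS : S = ∅ := Finset.card_eq_zero.1 (Nat.le_zero.1 hScard)
    subst hS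
    rw [hempty, hg0, hempty, mul_zero]
  · have hsR : (0:ℝ) < (s:ℝ) := by exact_mod_cast hspos
    set c : ℝ := 1 - 1/(s:ℝ) with hc
    have hc0 : 0 ≤ c := by
      have h : 1/(s:ℝ) ≤ 1 := by
        rw [div_le_one hsR]; exact_mod_cast hspos
      rw [hc]; linarith
    have key : ∀ t < s, f S - f (g (t+1)) ≤ c * (f S - f (g t)) := by
      intro t ht
      obtain ⟨x, hxV, hgt1, hmax⟩ := hgreedy t ht
      set G : ℝ := f (g (t+1)) - f (g t) with hG
      have hGx : G = f (insert x (g t)) - f (g t) := by rw [hG, hgt1]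
      have hG0 : 0 ≤ G := by
        rw [hGx]
        have := hmono (g t) (insert x (g t)) (Finset.subset_insert _ _)
        linarith
      have hsum : ∑ y ∈ S, (f (insert y (g t)) - f (g t)) ≤ (S.card : ℝ) * G := by
        calc ∑ y ∈ S, (f (insert y (g t)) - f (g t))
            ≤ ∑ _y ∈ S, G := by
              apply Finset.sum_le_sum
              intro y hy
              rw [hGx]
              exact hmax y (hSV hy)
          _ = (S.card : ℝ) * G := by rw [Finset.sum_const, nsmul_eq_mul]
      have h1 : f S ≤ f (S ∪ g t) := hmono _ _ Finset.subset_union_left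
      have h2 := greedy_sub_telescope f hsub (g t) S
      have hcard : (S.card : ℝ) * G ≤ (s : ℝ) * G := by
        apply mul_le_mul_of_nonneg_right _ hG0
        exact_mod_cast hScard
      have hD : f S - f (g t) ≤ (s:ℝ) * G := by linarith
      have hdiv : (f S - f (g t)) / (s:ℝ) ≤ G := (div_le_iff₀ hsR).2 (by linarith)
      have hexp : c * (f S - f (g t)) = (f S - f (g t)) - (f S - f (g t)) / (s:ℝ) := by
        rw [hc]; ring
      rw [hexp]
      have : f S - f (g (t+1)) = (f S - f (g t)) - G := by rw [hG]; ring
      linarith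
    have iter : ∀ t, t ≤ s → f S - f (g t) ≤ c ^ t * f S := by
      intro t
      induction t with
      | zero => intro _; simp [hg0, hempty]
      | succ n ih =>
        intro hns
        have h1 := key n (by omega)
        have h2 := ih (by omega)
        calc f S - f (g (n+1)) ≤ c * (f S - f (g n)) := h1
          _ ≤ c * (c ^ n * f S) := mul_le_mul_of_nonneg_left h2 hc0
          _ = c ^ (n+1) * f S := by ring
    have h3 := iter s le_rfl
    have hce : c ^ s ≤ (Real.exp 1)⁻¹ := by
      have h4 : c ≤ Real.exp (-(1/(s:ℝ))) := by
        have := Real.add_one_le_exp (-(1/(s:ℝ)))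
        rw [hc]; linarith
      have h5 : c ^ s ≤ Real.exp (-(1/(s:ℝ))) ^ s := pow_le_pow_left₀ hc0 h4 s
      have h6 : Real.exp (-(1/(s:ℝ))) ^ s = Real.exp ((s:ℝ) * (-(1/(s:ℝ)))) :=
        (Real.exp_nat_mul _ s).symm
      have h7 : (s:ℝ) * (-(1/(s:ℝ))) = -1 := by
        field_simp
      rw [h6, h7, Real.exp_neg] at h5
      exact h5
    have h8 : c ^ s * f S ≤ (Real.exp 1)⁻¹ * f S :=
      mul_le_mul_of_nonneg_right hce (hnonneg S)
    linarith
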